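/- For the two-component Camassa–Holm pencil, with g_λ as in the AKNS case (g_λ^{11} = 2u, g_λ^{12} = v - λ, g_λ^{22} = -2) and A_λ = λ² g_λ / det(g_λ), the central invariants c_i = -(1/(3f^i)) Res_{λ=u^i} Tr(g_λ^{-1}A_λ) equal c_i = -(u^i)²/12 for i = 1, 2, where u^{1,2} = v ± √(-4u) (u < 0) and f¹ = 8/(u²-u¹), f² = 8/(u¹-u²). -/

import Mathlib

open scoped Topology
open Filter

/-- for the two-component Camassa–Holm pencil, with
`A_λ = λ² g_λ/det g_λ` so that `Tr(g_λ⁻¹A_λ) = 2λ²/det g_λ`, `det g_λ = -4u - (v-λ)²`,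
canonical coordinates `u^{1,2} = v ± √(-4u)` (`u < 0`), `f¹ = 8/(u²-u¹)`,
`f² = 8/(u¹-u²)`, the central invariants `c_i = -(1/(3f^i)) Res_{λ=u^i} Tr(g_λ⁻¹A_λ)`
equal `c_i = -(u^i)²/12`. -/
theorem stmt12 (u v : ℝ) (hu : u < 0) :
    let u1 := v + Real.sqrt (-(4*u))
    let u2 := v - Real.sqrt (-(4*u))
    let f1 := 8 / (u2 - u1)
    let f2 := 8 / (u1 - u2)
    ∃ R1 R2 : ℝ,
      Tendsto (fun l => (l - u1) * (2 * l^2 / (-(4*u) - (v - l)^2))) (𝓝[≠] u1) (𝓝 R1) ∧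
      Tendsto (fun l => (l - u2) * (2 * l^2 / (-(4*u) - (v - l)^2))) (𝓝[≠] u2) (𝓝 R2) ∧
      -(1/(3*f1)) * R1 = -(u1^2)/12 ∧
      -(1/(3*f2)) * R2 = -(u2^2)/12 := by
  intro u1 u2 f1 f2
  have key : ∀ a b : ℝ, a ≠ b → -(1/(3*(8/(b-a)))) * (-2*a^2/(a-b)) = -(a^2)/12 := by
    intro a b hab
    have h1 : a - b ≠ 0 := sub_ne_zero.mpr hab
    have h2 : b - a ≠ 0 := sub_ne_zero.mpr hab.symm
    field_simp
    ring
  have hs : Real.sqrt (-(4*u)) > 0 := Real.sqrt_pos.mpr (by linarith)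
  have hsq : Real.sqrt (-(4*u)) ^ 2 = -(4*u) := Real.sq_sqrt (by linarith)
  have hne : u1 ≠ u2 := by simp only [u1, u2]; intro h; nlinarith
  have hdet : ∀ l : ℝ, -(4*u) - (v - l)^2 = -((l - u1) * (l - u2)) := by
    intro l; simp only [u1, u2]; nlinarith [hsq]
  refine ⟨-2*u1^2/(u1-u2), -2*u2^2/(u2-u1), ?_, ?_, ?_, ?_⟩
  · have h1 : Tendsto (fun l : ℝ => -2*l^2/(l-u2)) (𝓝[≠] u1) (𝓝 (-2*u1^2/(u1-u2))) := by
      apply Tendsto.mono_left _ nhdsWithin_le_nhds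
      exact (tendsto_const_nhds.mul ((continuous_id.pow 2).tendsto u1)).div
        (tendsto_id.sub tendsto_const_nhds) (sub_ne_zero.mpr hne)
    refine h1.congr' ?_
    filter_upwards [self_mem_nhdsWithin,
      eventually_nhdsWithin_of_eventually_nhds (eventually_ne_nhds hne)] with l h1l h2l
    rw [hdet l]
    have h1' : l - u1 ≠ 0 := sub_ne_zero.mpr h1l
    have h2' : l - u2 ≠ 0 := sub_ne_zero.mpr h2l
    field_simp
  · have h2 : Tendsto (fun l : ℝ => -2*l^2/(l-u1)) (𝓝[≠] u2) (𝓝 (-2*u2^2/(u2-u1))) := by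
      apply Tendsto.mono_left _ nhdsWithin_le_nhds
      exact (tendsto_const_nhds.mul ((continuous_id.pow 2).tendsto u2)).div
        (tendsto_id.sub tendsto_const_nhds) (sub_ne_zero.mpr hne.symm)
    refine h2.congr' ?_
    filter_upwards [self_mem_nhdsWithin,
      eventually_nhdsWithin_of_eventually_nhds (eventually_ne_nhds hne.symm)] with l h2l h1l
    rw [hdet l]
    have h1' : l - u1 ≠ 0 := sub_ne_zero.mpr h1l
    have h2' : l - u2 ≠ 0 := sub_ne_zero.mpr h2l
    field_simp
  · exact key u1 u2 hne
  · exact key u2 u1 hne.symm
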